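/- For every measurable scoring function g : 𝒳 → ℝ and every threshold λ ∈ ℝ, the stochastic process M_t(g, λ) := ∑_{u=1}^t (Z_u·1{g(X_u) > λ} − FPR(g, λ)), t ≥ 1, is a martingale with respect to the filtration (ℱ_t): each M_t(g, λ) is integrable and ℱ_t-measurable, and E[M_t(g, λ) | ℱ_{t−1}] = M_{t−1}(g, λ) almost surely. -/

import Mathlib

open MeasureTheory ProbabilityTheory
open scoped Classical

private lemma integrable_of_abs_le' {Ω : Type*} [MeasurableSpace Ω] {P : Measure Ω}
    [IsFiniteMeasure P] {f : Ω → ℝ} (hf : AEStronglyMeasurable f P) {C : ℝ}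
    (h : ∀ ω, |f ω| ≤ C) : Integrable f P :=
  Integrable.mono' (integrable_const C) hf (Filter.Eventually.of_forall fun ω => by
    simpa using h ω)

/-- For every measurable scoring function `g` and threshold `λ`, the process
`M_t(g, λ) := ∑_{u=1}^t (Z_u·1{g(X_u) > λ} − FPR(g, λ))` is a martingale w.r.t. the
filtration `ℱ`: each `M_t` is integrable and `ℱ_t`-measurable, and
`E[M_t | ℱ_{t−1}] = M_{t−1}` almost surely. -/
theorem importance_weighted_fpr_martingale
    {Ω : Type*} [m0 : MeasurableSpace Ω] (P : Measure Ω) [IsProbabilityMeasure P]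
    (ℱ : Filtration ℕ m0)
    {𝒳 : Type*} [m𝒳 : MeasurableSpace 𝒳] (D₀ : Measure 𝒳) [IsProbabilityMeasure D₀]
    (p : ℝ) (hp : 0 < p) (hp1 : p ≤ 1)
    (X : ℕ → Ω → 𝒳)
    (hXmeas : ∀ t, 1 ≤ t → Measurable[ℱ t] (X t))
    (hXindep : ∀ t, 1 ≤ t → Indep (MeasurableSpace.comap (X t) m𝒳) (ℱ (t - 1)) P)
    (hXlaw : ∀ t, 1 ≤ t → Measure.map (X t) P = D₀)
    (A : ℕ → Set (Ω × 𝒳))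
    (hA : ∀ t, 1 ≤ t → MeasurableSet[MeasurableSpace.prod (ℱ (t - 1)) m𝒳] (A t))
    (I : ℕ → Ω → ℝ)
    (hImeas : ∀ t, 1 ≤ t → Measurable[ℱ t] (I t))
    (hI01 : ∀ t ω, I t ω = 0 ∨ I t ω = 1)
    (hIp : ∀ t, 1 ≤ t → P {ω | I t ω = 1} = ENNReal.ofReal p)
    (hIindep : ∀ t, 1 ≤ t →
      Indep (MeasurableSpace.comap (I t) inferInstance)
        ((ℱ (t - 1) : MeasurableSpace Ω) ⊔ MeasurableSpace.comap (X t) m𝒳) P)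
    (Z : ℕ → Ω → ℝ)
    (hZ : ∀ t ω, Z t ω = (if (ω, X t ω) ∈ A t then (1 : ℝ) else 0)
        + (1 / p) * (if (ω, X t ω) ∈ A t then (0 : ℝ) else 1) * I t ω)
    (g : 𝒳 → ℝ) (hg : Measurable g) (lam : ℝ)
    (M : ℕ → Ω → ℝ)
    (hM : ∀ t ω, M t ω = ∑ u ∈ Finset.Icc 1 t,
        (Z u ω * (if lam < g (X u ω) then (1 : ℝ) else 0)
          - (D₀ {x | lam < g x}).toReal)) :
    (∀ t, Integrable (M t) P) ∧ (∀ t, Measurable[ℱ t] (M t)) ∧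
      ∀ t, 1 ≤ t → P[M t | ℱ (t - 1)] =ᵐ[P] M (t - 1) := by
  classical
  have hgset : MeasurableSet {x : 𝒳 | lam < g x} := measurableSet_lt measurable_const hg
  set c : ℝ := (D₀ {x | lam < g x}).toReal with hc
  have hc0 : 0 ≤ c := ENNReal.toReal_nonneg
  have hpinv : (1 : ℝ) ≤ 1 / p := by rw [le_div_iff₀ hp]; linarith
  -- bounds on Z
  have hZ01 : ∀ t ω, 0 ≤ Z t ω ∧ Z t ω ≤ 1 / p := by
    intro t ω
    by_cases hA' : (ω, X t ω) ∈ A t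
    · have h1 : Z t ω = 1 := by rw [hZ]; simp [hA']
      rw [h1]; exact ⟨zero_le_one, hpinv⟩
    · have h1 : Z t ω = 1 / p * I t ω := by rw [hZ]; simp [hA']
      rw [h1]
      rcases hI01 t ω with h | h <;> rw [h]
      · constructor <;> simp <;> positivity
      · rw [mul_one]
        constructor
        · positivity
        · exact le_rfl
  -- the step process
  set Y : ℕ → Ω → ℝ := fun u ω => Z u ω * (if lam < g (X u ω) then 1 else 0) with hYdef
  have hYbound : ∀ u ω, |Y u ω| ≤ 1 / p := by
    intro u ω
    obtain ⟨h0, h1⟩ := hZ01 u ω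
    simp only [hYdef]
    by_cases hT : lam < g (X u ω)
    · rw [if_pos hT, mul_one, abs_of_nonneg h0]; exact h1
    · rw [if_neg hT, mul_zero, abs_zero]; positivity
  -- measurability of the OOD-region set
  have hSmeas : ∀ u, 1 ≤ u → ∀ m : MeasurableSpace Ω, ℱ (u - 1) ≤ m →
      (@Measurable Ω 𝒳 m m𝒳 (X u)) → MeasurableSet[m] {ω | (ω, X u ω) ∈ A u} := by
    intro u hu m hle hX
    have hφ : @Measurable Ω (Ω × 𝒳) m ((ℱ (u - 1)).prod m𝒳) (fun ω => (ω, X u ω)) :=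
      @Measurable.prodMk Ω m Ω 𝒳 (ℱ (u - 1)) m𝒳 _ _ (measurable_id'' hle) hX
    exact hφ (hA u hu)
  -- measurability of Y u w.r.t. ℱ u
  have hYmeasF : ∀ u, 1 ≤ u → Measurable[ℱ u] (Y u) := by
    intro u hu
    have hS : MeasurableSet[ℱ u] {ω | (ω, X u ω) ∈ A u} :=
      hSmeas u hu (ℱ u) (ℱ.mono (Nat.sub_le u 1)) (hXmeas u hu)
    have hT : MeasurableSet[ℱ u] {ω | lam < g (X u ω)} := (hXmeas u hu) hgset
    have hZm : Measurable[ℱ u] (Z u) := by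
      have hZeq : Z u = fun ω => (if ω ∈ {ω | (ω, X u ω) ∈ A u} then (1 : ℝ) else 0)
          + (1 / p) * (if ω ∈ {ω | (ω, X u ω) ∈ A u} then (0 : ℝ) else 1) * I u ω :=
        funext fun ω => hZ u ω
      rw [hZeq]
      exact (Measurable.ite hS measurable_const measurable_const).add
        ((measurable_const.mul (Measurable.ite hS measurable_const measurable_const)).mul
          (hImeas u hu))
    exact hZm.mul (Measurable.ite hT measurable_const measurable_const)
  have hMfun : ∀ t, M t = fun ω => ∑ u ∈ Finset.Icc 1 t, (Y u ω - c) := fun t =>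
    funext fun ω => hM t ω
  -- measurability of M
  have hMmeas : ∀ t, Measurable[ℱ t] (M t) := by
    intro t
    rw [hMfun]
    apply Finset.measurable_sum
    intro u hu
    obtain ⟨h1, h2⟩ := Finset.mem_Icc.mp hu
    exact ((hYmeasF u h1).mono (ℱ.mono h2) le_rfl).sub measurable_const
  -- integrability of M
  have hMint : ∀ t, Integrable (M t) P := by
    intro t
    rw [hMfun]
    apply integrable_finset_sum
    intro u hu
    obtain ⟨h1, _⟩ := Finset.mem_Icc.mp hu
    have hm : AEStronglyMeasurable (fun ω => Y u ω - c) P :=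
      (((hYmeasF u h1).mono (ℱ.le u) le_rfl).sub measurable_const).aestronglyMeasurable
    refine integrable_of_abs_le' hm (C := 1 / p + c) fun ω => ?_
    obtain ⟨hl, hr⟩ := abs_le.mp (hYbound u ω)
    exact abs_le.mpr ⟨by linarith, by linarith⟩
  refine ⟨hMint, hMmeas, ?_⟩
  intro t ht
  obtain ⟨s, rfl⟩ : ∃ s, t = s + 1 := ⟨t - 1, (Nat.succ_pred_eq_of_pos ht).symm⟩
  simp only [Nat.add_sub_cancel]
  have hts : s + 1 - 1 = s := rfl
  have hX0 : Measurable (X (s + 1)) := (hXmeas _ ht).mono (ℱ.le _) le_rfl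
  have hI0 : Measurable (I (s + 1)) := (hImeas _ ht).mono (ℱ.le _) le_rfl
  have h𝒢le : ((ℱ s : MeasurableSpace Ω) ⊔ MeasurableSpace.comap (X (s + 1)) m𝒳) ≤ m0 :=
    sup_le (ℱ.le s) (measurable_iff_comap_le.mp hX0)
  have hle𝒢 : (ℱ s : MeasurableSpace Ω) ≤
      ((ℱ s : MeasurableSpace Ω) ⊔ MeasurableSpace.comap (X (s + 1)) m𝒳) := le_sup_left
  have hT𝒳 : MeasurableSet[MeasurableSpace.comap (X (s + 1)) m𝒳] {ω | lam < g (X (s + 1) ω)} :=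
    ⟨{x | lam < g x}, hgset, rfl⟩
  have hX𝒢 : @Measurable Ω 𝒳 ((ℱ s : MeasurableSpace Ω)
      ⊔ MeasurableSpace.comap (X (s + 1)) m𝒳) m𝒳 (X (s + 1)) :=
    measurable_iff_comap_le.mpr le_sup_right
  have hS𝒢 : MeasurableSet[(ℱ s : MeasurableSpace Ω) ⊔ MeasurableSpace.comap (X (s + 1)) m𝒳]
      {ω | (ω, X (s + 1) ω) ∈ A (s + 1)} := by
    have := hSmeas (s + 1) ht _ (hts ▸ hle𝒢) hX𝒢
    simpa [hts] using this
  have hT𝒢 : MeasurableSet[(ℱ s : MeasurableSpace Ω) ⊔ MeasurableSpace.comap (X (s + 1)) m𝒳]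
      {ω | lam < g (X (s + 1) ω)} :=
    (le_sup_right : MeasurableSpace.comap (X (s + 1)) m𝒳 ≤ _) _ hT𝒳
  have hTm0 : MeasurableSet {ω | lam < g (X (s + 1) ω)} := hX0 hgset
  -- the pieces
  set U : Ω → ℝ := fun ω =>
    if (ω, X (s + 1) ω) ∈ A (s + 1) ∧ lam < g (X (s + 1) ω) then 1 else 0 with hU
  set V : Ω → ℝ := fun ω =>
    if (ω, X (s + 1) ω) ∉ A (s + 1) ∧ lam < g (X (s + 1) ω) then 1 else 0 with hV
  set W : Ω → ℝ := fun ω => if lam < g (X (s + 1) ω) then 1 else 0 with hW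
  have hUV : ∀ ω, U ω + V ω = W ω := by
    intro ω
    by_cases hs' : (ω, X (s + 1) ω) ∈ A (s + 1) <;> by_cases ht' : lam < g (X (s + 1) ω) <;>
      simp [hU, hV, hW, hs', ht']
  have hYt : Y (s + 1) = fun ω => U ω + (1 / p) * ((V * I (s + 1)) ω) := by
    funext ω
    simp only [hYdef, hU, hV, Pi.mul_apply, hZ (s + 1) ω]
    by_cases hs' : (ω, X (s + 1) ω) ∈ A (s + 1) <;> by_cases ht' : lam < g (X (s + 1) ω) <;>
      simp [hs', ht'] <;> ring
  -- measurability / integrability of the pieces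
  have hU𝒢 : StronglyMeasurable[(ℱ s : MeasurableSpace Ω)
      ⊔ MeasurableSpace.comap (X (s + 1)) m𝒳] U :=
    (Measurable.ite (hS𝒢.inter hT𝒢) measurable_const measurable_const).stronglyMeasurable
  have hV𝒢 : StronglyMeasurable[(ℱ s : MeasurableSpace Ω)
      ⊔ MeasurableSpace.comap (X (s + 1)) m𝒳] V :=
    (Measurable.ite (hS𝒢.compl.inter hT𝒢) measurable_const measurable_const).stronglyMeasurable
  have hW𝒳 : StronglyMeasurable[MeasurableSpace.comap (X (s + 1)) m𝒳] W :=
    (Measurable.ite hT𝒳 measurable_const measurable_const).stronglyMeasurable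
  have hUm0 : Measurable U := (hU𝒢.measurable).mono h𝒢le le_rfl
  have hVm0 : Measurable V := (hV𝒢.measurable).mono h𝒢le le_rfl
  have hUint : Integrable U P := by
    refine integrable_of_abs_le' hUm0.aestronglyMeasurable (C := 1) fun ω => ?_
    by_cases h : (ω, X (s + 1) ω) ∈ A (s + 1) ∧ lam < g (X (s + 1) ω) <;> simp [hU, h]
  have hVint : Integrable V P := by
    refine integrable_of_abs_le' hVm0.aestronglyMeasurable (C := 1) fun ω => ?_
    by_cases h : (ω, X (s + 1) ω) ∉ A (s + 1) ∧ lam < g (X (s + 1) ω) <;> simp [hV, h]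
  have hIint : Integrable (I (s + 1)) P := by
    refine integrable_of_abs_le' hI0.aestronglyMeasurable (C := 1) fun ω => ?_
    rcases hI01 (s + 1) ω with h | h <;> simp [h]
  have hVIint : Integrable (V * I (s + 1)) P := by
    refine integrable_of_abs_le' (hVm0.mul hI0).aestronglyMeasurable (C := 1) fun ω => ?_
    rcases hI01 (s + 1) ω with h | h <;>
      by_cases h' : (ω, X (s + 1) ω) ∉ A (s + 1) ∧ lam < g (X (s + 1) ω) <;>
      simp [hV, h, h', Pi.mul_apply]
  -- expectation of I (s+1)
  have hIs_meas : MeasurableSet {ω | I (s + 1) ω = 1} := hI0 (measurableSet_singleton 1)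
  have hIavg : ∫ ω, I (s + 1) ω ∂P = p := by
    have hIind : I (s + 1) = Set.indicator {ω | I (s + 1) ω = 1} (fun _ => (1 : ℝ)) := by
      funext ω
      rcases hI01 (s + 1) ω with h | h <;> simp [Set.indicator_apply, h]
    rw [hIind, integral_indicator_const (1 : ℝ) hIs_meas, measureReal_def, hIp (s + 1) ht, smul_eq_mul, mul_one,
      ENNReal.toReal_ofReal hp.le]
  -- conditional expectation of I (s+1) given 𝒢 is p
  have hIcomapMeas : @Measurable Ω ℝ (MeasurableSpace.comap (I (s + 1)) inferInstance) _
      (I (s + 1)) := measurable_iff_comap_le.mpr le_rfl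
  have hIcond : P[I (s + 1)|(ℱ s : MeasurableSpace Ω) ⊔ MeasurableSpace.comap (X (s + 1)) m𝒳]
      =ᵐ[P] fun _ => p := by
    have h := condExp_indep_eq (μ := P) (measurable_iff_comap_le.mp hI0) h𝒢le
      hIcomapMeas.stronglyMeasurable (by simpa [hts] using hIindep (s + 1) ht)
    refine h.trans ?_
    rw [show (fun _ : Ω => ∫ x, I (s + 1) x ∂P) = fun _ : Ω => p from funext fun _ => hIavg]
  -- pull-out property
  have hVIcond𝒢 : P[V * I (s + 1)|(ℱ s : MeasurableSpace Ω)
      ⊔ MeasurableSpace.comap (X (s + 1)) m𝒳] =ᵐ[P] fun ω => p * V ω := by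
    refine (condExp_mul_of_stronglyMeasurable_left hV𝒢 hVIint hIint).trans ?_
    filter_upwards [hIcond] with ω hω
    simp only [Pi.mul_apply, hω, mul_comm]
  -- tower property
  have hVIcond : P[V * I (s + 1)|ℱ s] =ᵐ[P] fun ω => p * (P[V|ℱ s]) ω := by
    have h1 : P[V * I (s + 1)|ℱ s] =ᵐ[P] P[P[V * I (s + 1)|(ℱ s : MeasurableSpace Ω)
        ⊔ MeasurableSpace.comap (X (s + 1)) m𝒳]|ℱ s] :=
      (condExp_condExp_of_le hle𝒢 h𝒢le).symm
    have h2 : P[P[V * I (s + 1)|(ℱ s : MeasurableSpace Ω)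
        ⊔ MeasurableSpace.comap (X (s + 1)) m𝒳]|ℱ s] =ᵐ[P] P[fun ω => p * V ω|ℱ s] :=
      condExp_congr_ae hVIcond𝒢
    have h3 : P[fun ω => p * V ω|ℱ s] =ᵐ[P] fun ω => p * (P[V|ℱ s]) ω := by
      have := condExp_smul (μ := P) (m := ℱ s) p V
      exact this
    exact (h1.trans h2).trans h3
  -- conditional expectation of Y (s+1) given ℱ s
  have hYcond : P[Y (s + 1)|ℱ s] =ᵐ[P] fun _ => c := by
    have hadd : P[Y (s + 1)|ℱ s]
        =ᵐ[P] P[U|ℱ s] + P[fun ω => (1 / p) * ((V * I (s + 1)) ω)|ℱ s] := by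
      rw [hYt]
      exact condExp_add hUint (hVIint.const_mul _) _
    have hsc : P[fun ω => (1 / p) * ((V * I (s + 1)) ω)|ℱ s]
        =ᵐ[P] fun ω => (1 / p) * (P[V * I (s + 1)|ℱ s]) ω := by
      have := condExp_smul (μ := P) (m := ℱ s) (1 / p) (V * I (s + 1))
      exact this
    have hVfinal : (fun ω => (1 / p) * (P[V * I (s + 1)|ℱ s]) ω) =ᵐ[P] P[V|ℱ s] := by
      filter_upwards [hVIcond] with ω hω
      rw [hω]
      field_simp
    have hsum : P[U|ℱ s] + P[V|ℱ s] =ᵐ[P] P[W|ℱ s] := by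
      have h4 : P[fun ω => U ω + V ω|ℱ s] =ᵐ[P] P[U|ℱ s] + P[V|ℱ s] := condExp_add hUint hVint _
      refine h4.symm.trans (condExp_congr_ae ?_)
      exact Filter.Eventually.of_forall hUV
    have hWc : P[W|ℱ s] =ᵐ[P] fun _ => c := by
      have h := condExp_indep_eq (μ := P) (measurable_iff_comap_le.mp hX0) (ℱ.le s)
        hW𝒳 (by simpa [hts] using hXindep (s + 1) ht)
      refine h.trans ?_
      have hWeq : W = Set.indicator {ω | lam < g (X (s + 1) ω)} (fun _ => (1 : ℝ)) := by
        funext ω; simp [hW, Set.indicator_apply]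
      have hPT : P {ω | lam < g (X (s + 1) ω)} = D₀ {x | lam < g x} := by
        have h5 : {ω | lam < g (X (s + 1) ω)} = X (s + 1) ⁻¹' {x | lam < g x} := rfl
        rw [h5, ← Measure.map_apply hX0 hgset, hXlaw (s + 1) ht]
      rw [show (fun _ : Ω => ∫ x, W x ∂P) = fun _ : Ω => c from ?_]
      funext _
      rw [hWeq, integral_indicator_const (1 : ℝ) hTm0, measureReal_def, hPT, smul_eq_mul, mul_one, hc]
    calc P[Y (s + 1)|ℱ s]
        =ᵐ[P] P[U|ℱ s] + P[fun ω => (1 / p) * ((V * I (s + 1)) ω)|ℱ s] := hadd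
      _ =ᵐ[P] P[U|ℱ s] + P[V|ℱ s] := by
          filter_upwards [hsc, hVfinal] with ω h1 h2
          simp only [Pi.add_apply]
          rw [h1, h2]
      _ =ᵐ[P] P[W|ℱ s] := hsum
      _ =ᵐ[P] fun _ => c := hWc
  -- final assembly
  have hMstep : M (s + 1) = fun ω => M s ω + (Y (s + 1) ω - c) := by
    funext ω
    rw [hM (s + 1) ω, hM s ω, Finset.sum_Icc_succ_top (Nat.succ_le_succ (Nat.zero_le s))]
  have hYtcint : Integrable (fun ω => Y (s + 1) ω - c) P := by
    have hm : AEStronglyMeasurable (fun ω => Y (s + 1) ω - c) P :=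
      (((hYmeasF (s + 1) ht).mono (ℱ.le _) le_rfl).sub measurable_const).aestronglyMeasurable
    refine integrable_of_abs_le' hm (C := 1 / p + c) fun ω => ?_
    obtain ⟨hl, hr⟩ := abs_le.mp (hYbound (s + 1) ω)
    exact abs_le.mpr ⟨by linarith, by linarith⟩
  have hMscond : P[M s|ℱ s] = M s :=
    condExp_of_stronglyMeasurable (ℱ.le s) ((hMmeas s).stronglyMeasurable) (hMint s)
  have hsplit : P[M (s + 1)|ℱ s] =ᵐ[P] P[M s|ℱ s] + P[fun ω => Y (s + 1) ω - c|ℱ s] := by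
    rw [hMstep]
    exact condExp_add (hMint s) hYtcint _
  have hYtc : P[fun ω => Y (s + 1) ω - c|ℱ s] =ᵐ[P] fun _ => 0 := by
    have hYint : Integrable (Y (s + 1)) P :=
      integrable_of_abs_le' (((hYmeasF (s + 1) ht).mono (ℱ.le _)
        le_rfl).aestronglyMeasurable) (hYbound (s + 1))
    have h1 : P[fun ω => Y (s + 1) ω - c|ℱ s] =ᵐ[P] P[Y (s + 1)|ℱ s] - P[fun _ => c|ℱ s] :=
      condExp_sub hYint (integrable_const c) _
    refine h1.trans ?_
    rw [condExp_const (ℱ.le s) c]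
    filter_upwards [hYcond] with ω hω
    simp [hω]
  refine hsplit.trans ?_
  filter_upwards [hYtc] with ω h1
  simp [hMscond, h1]
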